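/- Let R be a commutative ring and r ∈ R such that the r-torsion in R is bounded (there exists m ≥ 1 with: r^n a = 0 for some n ≥ 1 implies r^m a = 0, for all a ∈ R). Then the r-torsion in any flat R-module is bounded by the same exponent m. -/
import Mathlib


/-- Let `R` be a commutative ring and `r ∈ R` such that the `r`-torsion
in `R` is bounded by an exponent `m ≥ 1` (i.e. `rⁿ a = 0` for some `n ≥ 1` implies
`r^m a = 0`).  Then the `r`-torsion in any flat `R`-module is bounded by the same
exponent `m`. -/
theorem flat_module_bounded_torsion_of_bounded_torsion
    (R : Type) [CommRing R] (r : R) (m : ℕ) (hm : 1 ≤ m)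
    (hR : ∀ (a : R) (n : ℕ), 1 ≤ n → r ^ n * a = 0 → r ^ m * a = 0)
    (F : Type) [AddCommGroup F] [Module R F] (hF : Module.Flat R F) :
    ∀ (x : F) (n : ℕ), 1 ≤ n → r ^ n • x = 0 → r ^ m • x = 0 := by
  intro x n hn hx
  classical
  set g : R →ₗ[R] R := LinearMap.lsmul R R (r ^ n) with hg
  set K : Submodule R R := LinearMap.ker g with hK
  have hexact : Function.Exact K.subtype g := g.exact_subtype_ker_map
  have hexactF : Function.Exact (K.subtype.rTensor F) (g.rTensor F) :=
    Module.Flat.rTensor_exact F hexact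
  have h1 : g.rTensor F ((1 : R) ⊗ₜ[R] x) = 0 := by
    rw [LinearMap.rTensor_tmul]
    have : g 1 = r ^ n := by simp [hg]
    rw [this]
    calc (r ^ n) ⊗ₜ[R] x = (r ^ n • (1 : R)) ⊗ₜ[R] x := by simp
      _ = (1 : R) ⊗ₜ[R] (r ^ n • x) := TensorProduct.smul_tmul _ _ _
      _ = 0 := by rw [hx, TensorProduct.tmul_zero]
  have hsm : ∀ t : TensorProduct R (↥K) F, (r ^ m) • t = 0 := by
    intro t
    induction t using TensorProduct.induction_on with
    | zero => simp
    | tmul k y =>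
      have hmem : r ^ n * (k : R) = 0 := by
        exact k.2
      have hk : r ^ m • k = 0 := by
        ext
        simpa [smul_eq_mul] using hR (k : R) n hn hmem
      rw [TensorProduct.smul_tmul', hk, TensorProduct.zero_tmul]
    | add a b ha hb => rw [smul_add, ha, hb, add_zero]
  obtain ⟨t, ht⟩ := (hexactF _).mp h1
  have h2 : (r ^ m) • ((1 : R) ⊗ₜ[R] x) = 0 := by
    rw [← ht, ← LinearMap.map_smul, hsm t, map_zero]
  have h3 : (1 : R) ⊗ₜ[R] (r ^ m • x) = (0 : TensorProduct R R F) := by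
    rw [← TensorProduct.smul_tmul, ← TensorProduct.smul_tmul']
    exact h2
  have := congrArg (TensorProduct.lid R F) h3
  simpa using this
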